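/- If a finite ranked poset P is partitioned into subposets P_1, ..., P_m, each of which is saturated and symmetric in P and each of which admits a symmetric chain decomposition, then P admits a symmetric chain decomposition. -/
import Mathlib


namespace PaperSCD

variable {β : Type*}

/-- `x` is covered by `y` with respect to the order relation `le`. -/
def Covers (le : β → β → Prop) (x y : β) : Prop :=
  le x y ∧ x ≠ y ∧ ∀ z, le x z → le z y → z = x ∨ z = y

/-- `r` is a rank function for the order `le`: covers raise rank by one and
minimal elements have rank zero. -/
def IsRankFn (le : β → β → Prop) (r : β → ℕ) : Prop :=
  (∀ x y, Covers le x y → r y = r x + 1) ∧ ∀ x, (∀ y, le y x → y = x) → r x = 0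

/-- `C` is a chain with respect to `le`. -/
def IsChn (le : β → β → Prop) (C : Set β) : Prop :=
  ∀ x ∈ C, ∀ y ∈ C, le x y ∨ le y x

/-- `x` is covered by `y` inside the subposet `S`. -/
def CoversIn (le : β → β → Prop) (S : Set β) (x y : β) : Prop :=
  x ∈ S ∧ y ∈ S ∧ le x y ∧ x ≠ y ∧ ∀ z ∈ S, le x z → le z y → z = x ∨ z = y

/-- The chain `C` is saturated in the ambient order: consecutive elements of `C`
are covers in the ambient order. -/
def SatChn (le : β → β → Prop) (C : Set β) : Prop :=
  ∀ x ∈ C, ∀ y ∈ C, CoversIn le C x y → Covers le x y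

/-- `C` is a nonempty saturated chain which is symmetric for rank function `r`
in a poset of rank `R`. -/
def IsSymmSatChain (le : β → β → Prop) (r : β → ℕ) (R : ℕ) (C : Set β) : Prop :=
  C.Nonempty ∧ IsChn le C ∧ SatChn le C ∧
    ∃ a ∈ C, ∃ b ∈ C, (∀ x ∈ C, le a x ∧ le x b) ∧ r a + r b = R

/-- `𝒟` is a symmetric chain decomposition. -/
def IsSCD (le : β → β → Prop) (r : β → ℕ) (R : ℕ) (𝒟 : Set (Set β)) : Prop :=
  (∀ C ∈ 𝒟, IsSymmSatChain le r R C) ∧ ∀ x : β, ∃! C, C ∈ 𝒟 ∧ x ∈ C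

/-- The order `le` is a symmetric chain order. -/
def IsSCO (le : β → β → Prop) : Prop :=
  ∃ (r : β → ℕ) (R : ℕ) (𝒟 : Set (Set β)),
    IsRankFn le r ∧ (∀ x, r x ≤ R) ∧ (Nonempty β → ∃ x, r x = R) ∧ IsSCD le r R 𝒟

/-- The quotient order on `Quot rel`: `[x] ≤ [y]` iff some representatives are comparable. -/
def qle (rel : β → β → Prop) (le : β → β → Prop) (a b : Quot rel) : Prop :=
  ∃ x y : β, Quot.mk rel x = a ∧ Quot.mk rel y = b ∧ le x y

/-- The permutation `(i, r) ↦ (ρ_r i, τ r)` of `[k] × [t]`. -/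
def wrPerm {k t : ℕ} (ρ : Fin t → Equiv.Perm (Fin k)) (τ : Equiv.Perm (Fin t)) :
    Equiv.Perm (Fin k × Fin t) where
  toFun p := (ρ p.2 p.1, τ p.2)
  invFun p := ((ρ (τ.symm p.2)).symm p.1, τ.symm p.2)
  left_inv := by rintro ⟨i, r⟩; simp
  right_inv := by rintro ⟨i, r⟩; simp

/-- The wreath product `K ≀ T` as a set of permutations of `[k] × [t]`. -/
def wreathSet {k t : ℕ} (K : Subgroup (Equiv.Perm (Fin k))) (T : Subgroup (Equiv.Perm (Fin t))) :
    Set (Equiv.Perm (Fin k × Fin t)) :=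
  { φ | ∃ ρ τ, (∀ r, ρ r ∈ K) ∧ τ ∈ T ∧ φ = wrPerm ρ τ }

/-- A subgroup of a permutation group is generated by powers of pairwise disjoint cycles. -/
def GenByPowersOfDisjointCycles {α : Type*} (T : Subgroup (Equiv.Perm α)) : Prop :=
  ∃ (m : ℕ) (σ : Fin m → Equiv.Perm α) (e : Fin m → ℕ),
    (∀ i, (σ i).IsCycle) ∧ (∀ i j, i ≠ j → (σ i).Disjoint (σ j)) ∧
    T = Subgroup.closure (Set.range fun i => σ i ^ e i)

/-- The `r`-th column of a subset of `[k] × [t]`, identified with a subset of `[k]`. -/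
def col {k t : ℕ} (X : Finset (Fin k × Fin t)) (r : Fin t) : Finset (Fin k) :=
  (X.filter fun p => p.2 = r).image Prod.fst

/-- Orbit relation of `K ≤ S_k` on subsets of `[k]`. -/
def relK {k : ℕ} (K : Subgroup (Equiv.Perm (Fin k))) :
    Finset (Fin k) → Finset (Fin k) → Prop :=
  fun A B => ∃ g ∈ K, A.image ⇑g = B

/-- Orbit relation of the wreath product `K ≀ T` on subsets of `[k] × [t]`. -/
def relW {k t : ℕ} (K : Subgroup (Equiv.Perm (Fin k))) (T : Subgroup (Equiv.Perm (Fin t))) :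
    Finset (Fin k × Fin t) → Finset (Fin k × Fin t) → Prop :=
  fun X Y => ∃ φ ∈ wreathSet K T, X.image ⇑φ = Y

/-- The rank (cardinality of a representative) on `B_k/K`. -/
def qrank {k : ℕ} (K : Subgroup (Equiv.Perm (Fin k))) : Quot (relK K) → ℕ :=
  Quot.lift Finset.card (by
    rintro A B ⟨g, -, rfl⟩
    exact (Finset.card_image_of_injective A g.injective).symm)

/-- The coordinate-permuting action `σ • f = f ∘ σ⁻¹`. -/
def actF {n : ℕ} {γ : Type*} (σ : Equiv.Perm (Fin n)) (f : Fin n → γ) : Fin n → γ :=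
  fun i => f (σ.symm i)

/-- `τ` stabilizes `j̄` under the coordinate-permuting action. -/
def ActStab {t s : ℕ} (τ : Equiv.Perm (Fin t)) (j : Fin t → Fin s) : Prop :=
  ∀ r, j (τ.symm r) = j r

end PaperSCD
open PaperSCD

/-- If a finite ranked poset is partitioned into saturated symmetric
subposets, each admitting a symmetric chain decomposition (relative to the induced
order and rank), then the poset admits a symmetric chain decomposition. -/
theorem stmt_0 {β : Type*} [Fintype β] (le : β → β → Prop)
    (hrefl : ∀ x, le x x) (hantisymm : ∀ x y, le x y → le y x → x = y)
    (htrans : ∀ x y z, le x y → le y z → le x z)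
    (r : β → ℕ) (R : ℕ) (hr : IsRankFn le r) (hR : ∀ x, r x ≤ R)
    (hRtop : Nonempty β → ∃ x, r x = R)
    {m : ℕ} (P : Fin m → Set β)
    (hpart : ∀ x : β, ∃! i : Fin m, x ∈ P i)
    (hsat : ∀ i, ∀ x ∈ P i, ∀ y ∈ P i, CoversIn le (P i) x y → Covers le x y)
    (hsym : ∀ i, ∃ a ∈ P i, ∃ b ∈ P i, (∀ x ∈ P i, le a x ∧ le x b) ∧ r a + r b = R)
    (hscd : ∀ i, ∃ 𝒟 : Set (Set β),
      (∀ C ∈ 𝒟, C ⊆ P i ∧ C.Nonempty ∧ IsChn le C ∧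
        (∀ x ∈ C, ∀ y ∈ C, CoversIn le C x y → CoversIn le (P i) x y) ∧
        ∃ c ∈ C, ∃ d ∈ C, (∀ x ∈ C, le c x ∧ le x d) ∧
          ∀ a ∈ P i, ∀ b ∈ P i, (∀ x ∈ P i, le a x ∧ le x b) → r c + r d = r a + r b) ∧
      (∀ x ∈ P i, ∃! C, C ∈ 𝒟 ∧ x ∈ C)) :
    ∃ 𝒟 : Set (Set β), IsSCD le r R 𝒟 := by
  choose D hD1 hD2 using hscd
  refine ⟨{C | ∃ i, C ∈ D i}, ?_, ?_⟩
  · rintro C ⟨i, hCi⟩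
    obtain ⟨hsub, hne, hchn, hcov, c, hc, d, hd, hcd, heq⟩ := hD1 i C hCi
    obtain ⟨a, ha, b, hb, hab, habR⟩ := hsym i
    refine ⟨hne, hchn, ?_, c, hc, d, hd, hcd, ?_⟩
    · intro x hx y hy hxy
      exact hsat i x (hsub hx) y (hsub hy) (hcov x hx y hy hxy)
    · rw [heq a ha b hb hab, habR]
  · intro x
    obtain ⟨i, hxi, hiu⟩ := hpart x
    obtain ⟨C, ⟨hC, hxC⟩, hCu⟩ := hD2 i x hxi
    refine ⟨C, ⟨⟨i, hC⟩, hxC⟩, ?_⟩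
    rintro C' ⟨⟨j, hC'⟩, hxC'⟩
    obtain ⟨hsub', -⟩ := hD1 j C' hC'
    have : j = i := hiu j (hsub' hxC')
    subst this
    exact hCu C' ⟨hC', hxC'⟩
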